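/- Let A be a real n×n matrix, B a real n×m matrix, Q a symmetric n×n matrix, R a symmetric positive definite m×m matrix, and let P, P̃ be symmetric positive semidefinite n×n matrices. Let P⁺ := Q + AᵀPA − AᵀPB(R + BᵀPB)⁻¹BᵀPA be the Riccati update of P with gain K := (R + BᵀPB)⁻¹BᵀPA, let K̃° := (R + BᵀP̃B)⁻¹BᵀP̃A be the Riccati gain of P̃, and for an arbitrary m×n matrix δ let P̃⁺ := (A − B(K̃°+δ))ᵀP̃(A − B(K̃°+δ)) + (K̃°+δ)ᵀR(K̃°+δ) + Q be the Lyapunov update of P̃ at the perturbed gain K̃° + δ. Then ‖P⁺ − P̃⁺‖ ≤ ‖A‖ · ‖A − BK‖ · ‖(I + P̃BR⁻¹Bᵀ)⁻¹‖ · ‖P − P̃‖ + ‖δ‖² · ‖R + BᵀP̃B‖. -/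

import Mathlib

open Matrix Finset

/-- Spectral norm of a real matrix: the operator norm with respect to the
Euclidean norms on the domain and codomain. -/
noncomputable def specNorm {p q : ℕ} (M : Matrix (Fin p) (Fin q) ℝ) : ℝ :=
  ‖LinearMap.toContinuousLinearMap (Matrix.toEuclideanLin M)‖

/-- Spectral radius of a real square matrix: the largest modulus of a
(complex) eigenvalue. -/
noncomputable def specRad {p : ℕ} (M : Matrix (Fin p) (Fin p) ℝ) : ℝ :=
  sSup {r : ℝ | ∃ μ ∈ spectrum ℂ (M.map (algebraMap ℝ ℂ)), r = ‖μ‖}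

/-- Smallest (real) eigenvalue of a square matrix. -/
noncomputable def lambdaMin {p : ℕ} (S : Matrix (Fin p) (Fin p) ℝ) : ℝ :=
  sInf {r : ℝ | ∃ v : Fin p → ℝ, v ≠ 0 ∧ S.mulVec v = r • v}

/-- `W`-induced norm of `M`: `sup_{z ≠ 0} √((zᵀMᵀWMz)/(zᵀWz))`. -/
noncomputable def winducedNorm {p : ℕ} (W M : Matrix (Fin p) (Fin p) ℝ) : ℝ :=
  sSup {r : ℝ | ∃ z : Fin p → ℝ, z ≠ 0 ∧
    r = Real.sqrt ((z ⬝ᵥ (Mᵀ * W * M).mulVec z) / (z ⬝ᵥ W.mulVec z))}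

/-- `W`-relative bound of a symmetric matrix `X`: `sup_{z ≠ 0} (zᵀXz)/(zᵀWz)`. -/
noncomputable def wrelBound {p : ℕ} (W X : Matrix (Fin p) (Fin p) ℝ) : ℝ :=
  sSup {r : ℝ | ∃ z : Fin p → ℝ, z ≠ 0 ∧
    r = (z ⬝ᵥ X.mulVec z) / (z ⬝ᵥ W.mulVec z)}

/-- Frobenius norm of a real matrix. -/
noncomputable def frobNorm {p q : ℕ} (M : Matrix (Fin p) (Fin q) ℝ) : ℝ :=
  Real.sqrt (∑ i, ∑ j, (M i j) ^ 2)

open scoped Matrix.Norms.L2Operator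

lemma specNorm_eq_norm {p q : ℕ} (M : Matrix (Fin p) (Fin q) ℝ) : specNorm M = ‖M‖ := rfl

lemma specNorm_transpose {p q : ℕ} (M : Matrix (Fin p) (Fin q) ℝ) : specNorm Mᵀ = specNorm M := by
  rw [specNorm_eq_norm, specNorm_eq_norm, ← Matrix.l2_opNorm_conjTranspose M,
    Matrix.conjTranspose_eq_transpose_of_trivial]

lemma key_identity {n m : ℕ}
    (A Q P Pt : Matrix (Fin n) (Fin n) ℝ) (B : Matrix (Fin n) (Fin m) ℝ)
    (R : Matrix (Fin m) (Fin m) ℝ) (K Kt δ : Matrix (Fin m) (Fin n) ℝ)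
    (ha : Bᵀ * (P * A) = R * K + Bᵀ * (P * (B * K)))
    (hb : Bᵀ * (Pt * A) = R * Kt + Bᵀ * (Pt * (B * Kt)))
    (hc : Aᵀ * (P * (B * K)) = Kᵀ * (R * K) + Kᵀ * (Bᵀ * (P * (B * K))))
    (hd : Aᵀ * (P * (B * Kt)) = Kᵀ * (R * Kt) + Kᵀ * (Bᵀ * (P * (B * Kt))))
    (he : Aᵀ * (Pt * (B * Kt)) = Ktᵀ * (R * Kt) + Ktᵀ * (Bᵀ * (Pt * (B * Kt))))
    (hf : Aᵀ * (Pt * (B * δ)) = Ktᵀ * (R * δ) + Ktᵀ * (Bᵀ * (Pt * (B * δ)))) :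
    (Q + Aᵀ * P * A - Aᵀ * P * B * K)
      - ((A - B * (Kt + δ))ᵀ * Pt * (A - B * (Kt + δ)) + (Kt + δ)ᵀ * R * (Kt + δ) + Q)
    = (A - B * K)ᵀ * (P - Pt) * (A - B * Kt) - δᵀ * ((R + Bᵀ * Pt * B) * δ) := by
  simp only [Matrix.transpose_sub, Matrix.transpose_add, Matrix.transpose_mul,
    Matrix.sub_mul, Matrix.mul_sub, Matrix.add_mul, Matrix.mul_add, Matrix.mul_assoc,
    ha, hb, hc, hd, he, hf]
  abel

/-- Perturbation bound: the distance between the Riccati update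
of `P` and the Lyapunov update of `P̃` at the `δ`-perturbed Riccati gain of `P̃`
is bounded by a contraction term in `‖P - P̃‖` plus a quadratic term in `‖δ‖`. -/
theorem riccati_lyapunov_update_perturbation_bound {n m : ℕ}
    (A : Matrix (Fin n) (Fin n) ℝ) (B : Matrix (Fin n) (Fin m) ℝ)
    (Q : Matrix (Fin n) (Fin n) ℝ) (R : Matrix (Fin m) (Fin m) ℝ)
    (P Pt : Matrix (Fin n) (Fin n) ℝ) (δ : Matrix (Fin m) (Fin n) ℝ)
    (hQ : Q.IsSymm) (hR : R.PosDef) (hP : P.PosSemidef) (hPt : Pt.PosSemidef) :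
    letI Pplus := Q + Aᵀ * P * A - Aᵀ * P * B * (R + Bᵀ * P * B)⁻¹ * (Bᵀ * P * A)
    letI K := (R + Bᵀ * P * B)⁻¹ * (Bᵀ * P * A)
    letI Kt0 := (R + Bᵀ * Pt * B)⁻¹ * (Bᵀ * Pt * A)
    letI Ptplus := (A - B * (Kt0 + δ))ᵀ * Pt * (A - B * (Kt0 + δ))
      + (Kt0 + δ)ᵀ * R * (Kt0 + δ) + Q
    specNorm (Pplus - Ptplus)
      ≤ specNorm A * specNorm (A - B * K)
          * specNorm ((1 : Matrix (Fin n) (Fin n) ℝ) + Pt * B * R⁻¹ * Bᵀ)⁻¹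
          * specNorm (P - Pt)
        + specNorm δ ^ 2 * specNorm (R + Bᵀ * Pt * B) := by
  -- symmetry facts
  have hPT : Pᵀ = P := by
    rw [← Matrix.conjTranspose_eq_transpose_of_trivial]; exact hP.1
  have hPtT : Ptᵀ = Pt := by
    rw [← Matrix.conjTranspose_eq_transpose_of_trivial]; exact hPt.1
  have hRT : Rᵀ = R := by
    rw [← Matrix.conjTranspose_eq_transpose_of_trivial]; exact hR.1
  -- positive definiteness of S = R + BᵀPB and St = R + BᵀPtB
  have hBPB : (Bᵀ * P * B).PosSemidef := by
    have := hP.conjTranspose_mul_mul_same B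
    rwa [Matrix.conjTranspose_eq_transpose_of_trivial] at this
  have hBPtB : (Bᵀ * Pt * B).PosSemidef := by
    have := hPt.conjTranspose_mul_mul_same B
    rwa [Matrix.conjTranspose_eq_transpose_of_trivial] at this
  set S := R + Bᵀ * P * B with hSdef
  set St := R + Bᵀ * Pt * B with hStdef
  have hS : S.PosDef := hR.add_posSemidef hBPB
  have hSt : St.PosDef := hR.add_posSemidef hBPtB
  have hSdet : IsUnit S.det := hS.det_pos.ne'.isUnit
  have hStdet : IsUnit St.det := hSt.det_pos.ne'.isUnit
  have hRdet : IsUnit R.det := hR.det_pos.ne'.isUnit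
  have hST : Sᵀ = S := by rw [hSdef, Matrix.transpose_add, hRT, Matrix.transpose_mul,
    Matrix.transpose_mul, Matrix.transpose_transpose, hPT, Matrix.mul_assoc]
  have hStT : Stᵀ = St := by rw [hStdef, Matrix.transpose_add, hRT, Matrix.transpose_mul,
    Matrix.transpose_mul, Matrix.transpose_transpose, hPtT, Matrix.mul_assoc]
  set K := S⁻¹ * (Bᵀ * P * A) with hKdef
  set Kt := St⁻¹ * (Bᵀ * Pt * A) with hKtdef
  -- gain relations
  have hK : Bᵀ * P * A = S * K := (Matrix.mul_nonsing_inv_cancel_left S _ hSdet).symm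
  have hKt : Bᵀ * Pt * A = St * Kt := (Matrix.mul_nonsing_inv_cancel_left St _ hStdet).symm
  have hK' : Aᵀ * P * B = Kᵀ * S := by
    have := congrArg Matrix.transpose hK
    simpa [Matrix.transpose_mul, hPT, hST, Matrix.mul_assoc] using this
  have hKt' : Aᵀ * Pt * B = Ktᵀ * St := by
    have := congrArg Matrix.transpose hKt
    simpa [Matrix.transpose_mul, hPtT, hStT, Matrix.mul_assoc] using this
  -- hypotheses of the key identity
  have ha : Bᵀ * (P * A) = R * K + Bᵀ * (P * (B * K)) := by
    have := hK; rw [hSdef] at this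
    simpa [Matrix.add_mul, Matrix.mul_assoc] using this
  have hb : Bᵀ * (Pt * A) = R * Kt + Bᵀ * (Pt * (B * Kt)) := by
    have := hKt; rw [hStdef] at this
    simpa [Matrix.add_mul, Matrix.mul_assoc] using this
  have hc : Aᵀ * (P * (B * K)) = Kᵀ * (R * K) + Kᵀ * (Bᵀ * (P * (B * K))) := by
    have := congrArg (· * K) hK'; rw [hSdef] at this
    simpa [Matrix.add_mul, Matrix.mul_add, Matrix.mul_assoc] using this
  have hd : Aᵀ * (P * (B * Kt)) = Kᵀ * (R * Kt) + Kᵀ * (Bᵀ * (P * (B * Kt))) := by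
    have := congrArg (· * Kt) hK'; rw [hSdef] at this
    simpa [Matrix.add_mul, Matrix.mul_add, Matrix.mul_assoc] using this
  have he : Aᵀ * (Pt * (B * Kt)) = Ktᵀ * (R * Kt) + Ktᵀ * (Bᵀ * (Pt * (B * Kt))) := by
    have := congrArg (· * Kt) hKt'; rw [hStdef] at this
    simpa [Matrix.add_mul, Matrix.mul_add, Matrix.mul_assoc] using this
  have hf : Aᵀ * (Pt * (B * δ)) = Ktᵀ * (R * δ) + Ktᵀ * (Bᵀ * (Pt * (B * δ))) := by
    have := congrArg (· * δ) hKt'; rw [hStdef] at this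
    simpa [Matrix.add_mul, Matrix.mul_add, Matrix.mul_assoc] using this
  -- key algebraic identity
  have hassoc : Aᵀ * P * B * S⁻¹ * (Bᵀ * P * A) = Aᵀ * P * B * K := by
    rw [hKdef, Matrix.mul_assoc]
  have hEq : (Q + Aᵀ * P * A - Aᵀ * P * B * S⁻¹ * (Bᵀ * P * A))
      - ((A - B * (Kt + δ))ᵀ * Pt * (A - B * (Kt + δ)) + (Kt + δ)ᵀ * R * (Kt + δ) + Q)
      = (A - B * K)ᵀ * (P - Pt) * (A - B * Kt) - δᵀ * (St * δ) := by
    rw [hassoc, hStdef]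
    exact key_identity A Q P Pt B R K Kt δ ha hb hc hd he hf
  -- Woodbury: (1 + Pt B R⁻¹ Bᵀ)⁻¹ = Mᵀ where M = 1 - B St⁻¹ Bᵀ Pt
  set M : Matrix (Fin n) (Fin n) ℝ := 1 - B * (St⁻¹ * (Bᵀ * Pt)) with hMdef
  have hMA : M * A = A - B * Kt := by
    rw [hMdef, hKtdef]
    simp [Matrix.sub_mul, Matrix.mul_assoc]
  have hMT : Mᵀ = 1 - Pt * B * St⁻¹ * Bᵀ := by
    rw [hMdef]
    have hStinvT : (St⁻¹)ᵀ = St⁻¹ := by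
      rw [Matrix.transpose_nonsing_inv, hStT]
    simp [Matrix.transpose_sub, Matrix.transpose_mul, hPtT, hStinvT, Matrix.mul_assoc]
  have hmid2 : St⁻¹ * (Bᵀ * (Pt * (B * (R⁻¹ * Bᵀ)))) = R⁻¹ * Bᵀ - St⁻¹ * Bᵀ := by
    have h0 : Bᵀ * Pt * B = St - R := by rw [hStdef]; abel
    have h1 : Bᵀ * (Pt * (B * (R⁻¹ * Bᵀ))) = St * (R⁻¹ * Bᵀ) - R * (R⁻¹ * Bᵀ) := by
      calc Bᵀ * (Pt * (B * (R⁻¹ * Bᵀ))) = (Bᵀ * Pt * B) * (R⁻¹ * Bᵀ) := by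
            rw [Matrix.mul_assoc, Matrix.mul_assoc]
        _ = (St - R) * (R⁻¹ * Bᵀ) := by rw [h0]
        _ = St * (R⁻¹ * Bᵀ) - R * (R⁻¹ * Bᵀ) := Matrix.sub_mul _ _ _
    rw [h1, Matrix.mul_sub, Matrix.nonsing_inv_mul_cancel_left _ _ hStdet,
      Matrix.mul_nonsing_inv_cancel_left _ _ hRdet]
  have hWood : Mᵀ * ((1 : Matrix (Fin n) (Fin n) ℝ) + Pt * B * R⁻¹ * Bᵀ) = 1 := by
    rw [hMT]
    simp only [Matrix.sub_mul, Matrix.mul_add, Matrix.mul_one, Matrix.one_mul, Matrix.mul_assoc,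
      hmid2, Matrix.mul_sub]
    abel
  have hInv : ((1 : Matrix (Fin n) (Fin n) ℝ) + Pt * B * R⁻¹ * Bᵀ)⁻¹ = Mᵀ :=
    Matrix.inv_eq_left_inv hWood
  -- rewrite the difference
  have hEq2 : (Q + Aᵀ * P * A - Aᵀ * P * B * S⁻¹ * (Bᵀ * P * A))
      - ((A - B * (Kt + δ))ᵀ * Pt * (A - B * (Kt + δ)) + (Kt + δ)ᵀ * R * (Kt + δ) + Q)
      = (A - B * K)ᵀ * ((P - Pt) * (M * A)) - δᵀ * (St * δ) := by
    rw [hEq, hMA, Matrix.mul_assoc]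
  rw [specNorm_eq_norm, hEq2]
  -- norm estimates
  have hnorm1 : ‖(A - B * K)ᵀ * ((P - Pt) * (M * A))‖
      ≤ specNorm A * specNorm (A - B * K) * specNorm Mᵀ * specNorm (P - Pt) := by
    have hT : ((A - B * K)ᵀ * ((P - Pt) * (M * A)))ᵀ
        = Aᵀ * (Mᵀ * ((P - Pt) * (A - B * K))) := by
      have hPPt : (P - Pt)ᵀ = P - Pt := by rw [Matrix.transpose_sub, hPT, hPtT]
      simp [Matrix.transpose_mul, hPPt, Matrix.mul_assoc]
    have e1 : ‖(A - B * K)ᵀ * ((P - Pt) * (M * A))‖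
        = ‖Aᵀ * (Mᵀ * ((P - Pt) * (A - B * K)))‖ := by
      rw [← specNorm_eq_norm, ← specNorm_eq_norm, ← specNorm_transpose
        ((A - B * K)ᵀ * ((P - Pt) * (M * A))), hT]
    rw [e1]
    have b1 : ‖Aᵀ * (Mᵀ * ((P - Pt) * (A - B * K)))‖
        ≤ ‖Aᵀ‖ * (‖Mᵀ‖ * (‖P - Pt‖ * ‖A - B * K‖)) := by
      refine (Matrix.l2_opNorm_mul _ _).trans ?_
      refine mul_le_mul_of_nonneg_left ((Matrix.l2_opNorm_mul _ _).trans ?_) (norm_nonneg _)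
      exact mul_le_mul_of_nonneg_left (Matrix.l2_opNorm_mul _ _) (norm_nonneg _)
    refine b1.trans (le_of_eq ?_)
    rw [← specNorm_eq_norm Aᵀ, specNorm_transpose]
    simp only [specNorm_eq_norm]
    ring
  have hnorm2 : ‖δᵀ * (St * δ)‖ ≤ specNorm δ ^ 2 * specNorm St := by
    have b2 : ‖δᵀ * (St * δ)‖ ≤ ‖δᵀ‖ * (‖St‖ * ‖δ‖) := by
      refine (Matrix.l2_opNorm_mul _ _).trans ?_
      exact mul_le_mul_of_nonneg_left (Matrix.l2_opNorm_mul _ _) (norm_nonneg _)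
    refine b2.trans (le_of_eq ?_)
    rw [← specNorm_eq_norm δᵀ, specNorm_transpose]
    simp only [specNorm_eq_norm]
    ring
  calc ‖(A - B * K)ᵀ * ((P - Pt) * (M * A)) - δᵀ * (St * δ)‖
      ≤ ‖(A - B * K)ᵀ * ((P - Pt) * (M * A))‖ + ‖δᵀ * (St * δ)‖ := norm_sub_le _ _
    _ ≤ specNorm A * specNorm (A - B * K) * specNorm Mᵀ * specNorm (P - Pt)
        + specNorm δ ^ 2 * specNorm St := add_le_add hnorm1 hnorm2
    _ = specNorm A * specNorm (A - B * K)
          * specNorm ((1 : Matrix (Fin n) (Fin n) ℝ) + Pt * B * R⁻¹ * Bᵀ)⁻¹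
          * specNorm (P - Pt)
        + specNorm δ ^ 2 * specNorm St := by rw [hInv]
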